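/- arXiv:2004.07234 — 2 statements merged into one kernel-verified Lean document; each statement's English description precedes it below -/
import Mathlib

section
/- Let g : ℝ^d → ℝ^D be three times continuously differentiable with bounded derivatives up to order 3, x ∈ ℝ^d, and for each σ > 0 let X_σ ~ N(x, σ²I_d). Then (1/σ²) Cov(g(X_σ)) converges to J_g(x) J_g(x)^T as σ → 0. -/
open MeasureTheory ProbabilityTheory

/-- The product Gaussian measure `N(x, σ²I_d)` on `ℝ^d`. -/
noncomputable def gaussianPi (d : ℕ) (x : Fin d → ℝ) (σ : ℝ) : Measure (Fin d → ℝ) :=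
  Measure.pi fun i => gaussianReal (x i) (Real.toNNReal (σ ^ 2))

/-- The covariance matrix (as a function `Fin D → Fin D → ℝ`) of the pushforward
of `μ` under `g`. -/
noncomputable def covFn {d D : ℕ} (μ : Measure (Fin d → ℝ))
    (g : (Fin d → ℝ) → (Fin D → ℝ)) : Fin D → Fin D → ℝ :=
  fun a b => ∫ y, (g y a - ∫ z, g z a ∂μ) * (g y b - ∫ z, g z b ∂μ) ∂μ

/-- The Jacobian matrix of `g` at `x`, as a function `Fin D → Fin d → ℝ`. -/
noncomputable def jacobianFn {d D : ℕ} (g : (Fin d → ℝ) → (Fin D → ℝ))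
    (x : Fin d → ℝ) : Fin D → Fin d → ℝ :=
  fun a k => fderiv ℝ g x (Pi.single k 1) a

open Real Filter Set Asymptotics

namespace CovAux

lemma integral_odd_zero (f : ℝ → ℝ) (hf : ∀ x, f (-x) = - f x) : ∫ x, f x = 0 := by
  have m : MeasurableEmbedding (fun x : ℝ => -x) := (Homeomorph.neg ℝ).measurableEmbedding
  have h : ∫ x, f x = ∫ x, f (-x) := by
    conv_lhs => rw [← Measure.map_neg_eq_self (volume : Measure ℝ), m.integral_map]
  simp_rw [hf, integral_neg] at h
  linarith

lemma integrable_exp_base : Integrable (fun t : ℝ => exp (-t^2/2)) := by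
  have := integrable_exp_neg_mul_sq (show (0:ℝ) < 1/2 by norm_num)
  convert this using 2 with t
  ring_nf

lemma integrable_mul_exp_base : Integrable (fun t : ℝ => t * exp (-t^2/2)) := by
  have := integrable_mul_exp_neg_mul_sq (show (0:ℝ) < 1/2 by norm_num)
  convert this using 2 with t
  ring_nf

lemma integrable_abs_mul_exp_base : Integrable (fun t : ℝ => |t| * exp (-t^2/2)) := by
  have := integrable_mul_exp_base.abs
  convert this using 2 with t
  rw [abs_mul, abs_of_pos (exp_pos _)]

lemma integrable_sq_mul_exp_base : Integrable (fun t : ℝ => t^2 * exp (-t^2/2)) := by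
  have := integrable_rpow_mul_exp_neg_mul_sq (show (0:ℝ) < 1/2 by norm_num)
    (show (-1:ℝ) < 2 by norm_num)
  convert this using 2 with t
  rw [show ((2:ℝ) = ((2:ℕ):ℝ)) by norm_num, rpow_natCast]
  ring_nf

lemma integral_exp_base : ∫ t : ℝ, exp (-t^2/2) = √(2*π) := by
  have := integral_gaussian (1/2 : ℝ)
  rw [show (π / (1/2 : ℝ)) = 2 * π by ring] at this
  rw [← this]
  congr 1 with t
  ring_nf

lemma integral_mul_exp_base : ∫ t : ℝ, t * exp (-t^2/2) = 0 := by
  apply integral_odd_zero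
  intro x
  rw [neg_pow]
  ring_nf

lemma hasDeriv_aux : ∀ t : ℝ, HasDerivAt (fun t : ℝ => -t * exp (-t^2/2))
    (t^2 * exp (-t^2/2) - exp (-t^2/2)) t := by
  intro t
  have h1 : HasDerivAt (fun t : ℝ => -t^2/2) (-t) t := by
    have := ((hasDerivAt_pow 2 t).neg).div_const 2
    refine this.congr_deriv ?_
    norm_num; ring
  have h2 : HasDerivAt (fun t : ℝ => exp (-t^2/2)) (exp (-t^2/2) * (-t)) t := (h1.exp)
  have h3 := (hasDerivAt_neg t).mul h2
  refine h3.congr_deriv ?_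
  ring

lemma tendsto_aux : Tendsto (fun t : ℝ => -t * exp (-t^2/2)) atTop (nhds 0) := by
  have h := rpow_mul_exp_neg_mul_sq_isLittleO_exp_neg (show (0:ℝ) < 1/2 by norm_num) 1
  have hh : Tendsto (fun x : ℝ => exp (-(1/2) * x)) atTop (nhds 0) := by
    have h3 : Tendsto (fun x : ℝ => (1/2) * x) atTop atTop :=
      Tendsto.const_mul_atTop (by norm_num) tendsto_id
    have := tendsto_exp_atBot.comp (tendsto_neg_atTop_atBot.comp h3)
    refine this.congr fun x => by simp [Function.comp, neg_mul]
  have h2 : Tendsto (fun t : ℝ => t * exp (-t^2/2)) atTop (nhds 0) := by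
    have := h.trans_tendsto hh
    refine this.congr' ?_
    filter_upwards [eventually_ge_atTop (0:ℝ)] with t _
    rw [rpow_one]
    ring_nf
  simpa using h2.neg


lemma integral_sq_exp_base : ∫ t : ℝ, t^2 * exp (-t^2/2) = √(2*π) := by
  have habs : ∀ (f : ℝ → ℝ), (∀ t, f |t| = f t) → ∫ t : ℝ, f t = 2 * ∫ t in Ioi (0:ℝ), f t := by
    intro f hf
    rw [← integral_comp_abs (f := f)]
    simp_rw [hf]
  have h1 : ∫ t : ℝ, t^2 * exp (-t^2/2) = 2 * ∫ t in Ioi (0:ℝ), t^2 * exp (-t^2/2) :=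
    habs _ (fun t => by rw [sq_abs])
  have h2 : ∫ t : ℝ, exp (-t^2/2) = 2 * ∫ t in Ioi (0:ℝ), exp (-t^2/2) :=
    habs _ (fun t => by rw [sq_abs])
  have key : ∫ t in Ioi (0:ℝ), (t^2 * exp (-t^2/2) - exp (-t^2/2)) = 0 := by
    have := integral_Ioi_of_hasDerivAt_of_tendsto
      (f := fun t : ℝ => -t * exp (-t^2/2))
      (f' := fun t : ℝ => t^2 * exp (-t^2/2) - exp (-t^2/2)) (a := 0)
      (Continuous.continuousWithinAt (by continuity))
      (fun t _ => hasDeriv_aux t)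
      ((integrable_sq_mul_exp_base.sub integrable_exp_base).integrableOn)
      tendsto_aux
    simpa using this
  have hsub := integral_sub (integrable_sq_mul_exp_base.integrableOn)
      (integrable_exp_base.integrableOn) (μ := volume.restrict (Ioi (0:ℝ)))
  rw [hsub] at key
  have : ∫ t in Ioi (0:ℝ), t^2 * exp (-t^2/2) = ∫ t in Ioi (0:ℝ), exp (-t^2/2) := by linarith
  rw [h1, this, ← h2, integral_exp_base]


noncomputable def γ1 : Measure ℝ := gaussianReal 0 1

instance : IsProbabilityMeasure γ1 := inferInstanceAs (IsProbabilityMeasure (gaussianReal 0 1))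

lemma pdf_eq : gaussianPDFReal 0 1 = fun t => (√(2*π))⁻¹ * exp (-t^2/2) := by
  funext t
  simp [gaussianPDFReal, NNReal.coe_one]

lemma γ1_withDensity :
    γ1 = volume.withDensity fun t => ((gaussianPDFReal 0 1 t).toNNReal : ENNReal) := by
  rw [γ1, gaussianReal_of_var_ne_zero _ one_ne_zero]
  rfl

lemma integral_γ1 (f : ℝ → ℝ) :
    ∫ t, f t ∂γ1 = ∫ t, gaussianPDFReal 0 1 t * f t := by
  rw [γ1_withDensity,
    integral_withDensity_eq_integral_smul ((measurable_gaussianPDFReal 0 1).real_toNNReal)]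
  congr 1 with t
  rw [NNReal.smul_def, Real.coe_toNNReal _ (gaussianPDFReal_nonneg _ _ _), smul_eq_mul]

lemma integrable_γ1_iff (f : ℝ → ℝ) :
    Integrable f γ1 ↔ Integrable (fun t => gaussianPDFReal 0 1 t * f t) volume := by
  rw [γ1_withDensity,
    integrable_withDensity_iff_integrable_smul ((measurable_gaussianPDFReal 0 1).real_toNNReal)]
  constructor <;> intro h <;> refine h.congr (Filter.Eventually.of_forall fun t => ?_) <;>
    simp only [NNReal.smul_def, Real.coe_toNNReal _ (gaussianPDFReal_nonneg 0 1 t), smul_eq_mul]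

lemma integrable_id_γ1 : Integrable (fun t => t) γ1 := by
  rw [integrable_γ1_iff, pdf_eq]
  have := integrable_mul_exp_base.const_mul (√(2*π))⁻¹
  refine this.congr (Filter.Eventually.of_forall fun t => ?_)
  ring

lemma integrable_abs_γ1 : Integrable (fun t => |t|) γ1 := by
  rw [integrable_γ1_iff, pdf_eq]
  have := integrable_abs_mul_exp_base.const_mul (√(2*π))⁻¹
  refine this.congr (Filter.Eventually.of_forall fun t => ?_)
  ring

lemma integrable_sq_γ1 : Integrable (fun t => t^2) γ1 := by
  rw [integrable_γ1_iff, pdf_eq]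
  have := integrable_sq_mul_exp_base.const_mul (√(2*π))⁻¹
  refine this.congr (Filter.Eventually.of_forall fun t => ?_)
  ring

lemma integral_id_γ1 : ∫ t, t ∂γ1 = 0 := by
  rw [integral_γ1, pdf_eq]
  have : (fun t : ℝ => (√(2*π))⁻¹ * exp (-t^2/2) * t)
      = fun t : ℝ => (√(2*π))⁻¹ * (t * exp (-t^2/2)) := by funext t; ring
  rw [this, MeasureTheory.integral_const_mul, integral_mul_exp_base, mul_zero]

lemma integral_sq_γ1 : ∫ t, t^2 ∂γ1 = 1 := by
  rw [integral_γ1, pdf_eq]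
  have : (fun t : ℝ => (√(2*π))⁻¹ * exp (-t^2/2) * t^2)
      = fun t : ℝ => (√(2*π))⁻¹ * (t^2 * exp (-t^2/2)) := by funext t; ring
  rw [this, MeasureTheory.integral_const_mul, integral_sq_exp_base,
    inv_mul_cancel₀ (Real.sqrt_pos.mpr (by positivity)).ne']


lemma pi_integral {n : ℕ} (f : Fin n → ℝ → ℝ) :
    ∫ z : Fin n → ℝ, ∏ i, f i (z i) ∂(Measure.pi fun _ => γ1) = ∏ i, ∫ t, f i t ∂γ1 := by
  letI : MeasureSpace ℝ := ⟨γ1⟩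
  haveI : SigmaFinite (volume : Measure ℝ) := inferInstanceAs (SigmaFinite γ1)
  exact MeasureTheory.integral_fintype_prod_eq_prod f

lemma pi_integrable {n : ℕ} (f : Fin n → ℝ → ℝ) (hf : ∀ i, Integrable (f i) γ1) :
    Integrable (fun z : Fin n → ℝ => ∏ i, f i (z i)) (Measure.pi fun _ => γ1) := by
  letI : MeasureSpace ℝ := ⟨γ1⟩
  haveI : SigmaFinite (volume : Measure ℝ) := inferInstanceAs (SigmaFinite γ1)
  exact MeasureTheory.Integrable.fintype_prod hf

variable {d : ℕ}

lemma integrable_coord (k : Fin d) (φ : ℝ → ℝ) (hφ : Integrable φ γ1) :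
    Integrable (fun z : Fin d → ℝ => φ (z k)) (Measure.pi fun _ => γ1) := by
  have h := pi_integrable (fun i => if i = k then φ else fun _ => 1)
    (fun i => by by_cases h : i = k <;> simp [h, hφ])
  refine h.congr (Filter.Eventually.of_forall fun z => ?_)
  have e : ∀ i, (if i = k then φ else fun _ => (1:ℝ)) (z i) = if i = k then φ (z i) else 1 :=
    fun i => by by_cases h : i = k <;> simp [h]
  simp only [e]
  rw [Finset.prod_ite_eq' Finset.univ k (fun i => φ (z i))]
  simp

lemma integral_coord (k : Fin d) (φ : ℝ → ℝ) :
    ∫ z : Fin d → ℝ, φ (z k) ∂(Measure.pi fun _ => γ1) = ∫ t, φ t ∂γ1 := by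
  have h := pi_integral (n := d) (fun i => if i = k then φ else fun _ => 1)
  have h2 : ∀ z : Fin d → ℝ,
      (∏ i, (if i = k then φ else fun _ => (1:ℝ)) (z i)) = φ (z k) := by
    intro z
    have e : ∀ i, (if i = k then φ else fun _ => (1:ℝ)) (z i) = if i = k then φ (z i) else 1 :=
      fun i => by by_cases h : i = k <;> simp [h]
    simp only [e]
    rw [Finset.prod_ite_eq' Finset.univ k (fun i => φ (z i))]
    simp
  simp_rw [h2] at h
  rw [h]
  rw [Finset.prod_eq_single k (fun i _ hik => by simp [hik]) (by simp)]
  simp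

lemma prod_two {n : ℕ} (k l : Fin n) (hkl : k ≠ l) (u : Fin n → ℝ)
    (hu : ∀ i, i ≠ k → i ≠ l → u i = 1) : ∏ i, u i = u k * u l := by
  rw [← Finset.mul_prod_erase Finset.univ u (Finset.mem_univ k),
    ← Finset.mul_prod_erase _ u
      (show l ∈ Finset.univ.erase k by simp [Finset.mem_erase, hkl.symm]),
    Finset.prod_eq_one (fun i hi => by
      rw [Finset.mem_erase, Finset.mem_erase] at hi
      exact hu i hi.2.1 hi.1)]
  ring

lemma integrable_coord2 {k l : Fin d} (hkl : k ≠ l) (φ ψ : ℝ → ℝ)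
    (hφ : Integrable φ γ1) (hψ : Integrable ψ γ1) :
    Integrable (fun z : Fin d → ℝ => φ (z k) * ψ (z l)) (Measure.pi fun _ => γ1) := by
  have h := pi_integrable (fun i => if i = k then φ else if i = l then ψ else fun _ => 1)
    (fun i => by by_cases h1 : i = k
                 · simp [h1, hφ]
                 · by_cases h2 : i = l <;> simp [h1, h2, hφ, hψ, if_neg (Ne.symm hkl)])
  refine h.congr (Filter.Eventually.of_forall fun z => ?_)
  dsimp only
  rw [prod_two k l hkl _ (fun i hik hil => by simp [hik, hil]),
    (if_pos rfl : (if k = k then φ else if k = l then ψ else fun _ => (1:ℝ)) = φ),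
    (show (if l = k then φ else if l = l then ψ else fun _ => (1:ℝ)) = ψ by
      rw [if_neg (Ne.symm hkl), if_pos rfl])]

lemma integral_coord2 {k l : Fin d} (hkl : k ≠ l) (φ ψ : ℝ → ℝ) :
    ∫ z : Fin d → ℝ, φ (z k) * ψ (z l) ∂(Measure.pi fun _ => γ1)
      = (∫ t, φ t ∂γ1) * ∫ t, ψ t ∂γ1 := by
  have h := pi_integral (n := d) (fun i => if i = k then φ else if i = l then ψ else fun _ => 1)
  have h2 : ∀ z : Fin d → ℝ,
      (∏ i, (if i = k then φ else if i = l then ψ else fun _ => (1:ℝ)) (z i))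
        = φ (z k) * ψ (z l) := by
    intro z
    rw [prod_two k l hkl _ (fun i hik hil => by simp [hik, hil]),
      (if_pos rfl : (if k = k then φ else if k = l then ψ else fun _ => (1:ℝ)) = φ),
      (show (if l = k then φ else if l = l then ψ else fun _ => (1:ℝ)) = ψ by
        rw [if_neg (Ne.symm hkl), if_pos rfl])]
  simp_rw [h2] at h
  rw [h, prod_two k l hkl _ (fun i hik hil => by simp [hik, hil]),
    (if_pos rfl : (if k = k then φ else if k = l then ψ else fun _ => (1:ℝ)) = φ),
    (show (if l = k then φ else if l = l then ψ else fun _ => (1:ℝ)) = ψ by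
      rw [if_neg (Ne.symm hkl), if_pos rfl])]


lemma integrable_mul_coord (k l : Fin d) :
    Integrable (fun z : Fin d → ℝ => z k * z l) (Measure.pi fun _ => γ1) := by
  by_cases h : k = l
  · subst h
    exact (integrable_coord k (fun t => t^2) integrable_sq_γ1).congr
      (Filter.Eventually.of_forall fun z => pow_two (z k))
  · exact integrable_coord2 h _ _ integrable_id_γ1 integrable_id_γ1

lemma integrable_abs_mul_coord (k l : Fin d) :
    Integrable (fun z : Fin d → ℝ => |z k| * |z l|) (Measure.pi fun _ => γ1) := by
  by_cases h : k = l
  · subst h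
    exact (integrable_coord k (fun t => t^2) integrable_sq_γ1).congr
      (Filter.Eventually.of_forall fun z => by show z k ^ 2 = |z k| * |z k|; rw [abs_mul_abs_self, pow_two])
  · exact integrable_coord2 h _ _ integrable_abs_γ1 integrable_abs_γ1

lemma integral_mul_coord (k l : Fin d) :
    ∫ z : Fin d → ℝ, z k * z l ∂(Measure.pi fun _ => γ1) = if k = l then 1 else 0 := by
  by_cases h : k = l
  · subst h
    rw [if_pos rfl]
    have : ∀ z : Fin d → ℝ, z k * z k = (fun t => t^2) (z k) := fun z => (sq (z k)).symm
    simp_rw [this]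
    rw [integral_coord k (fun t => t^2), integral_sq_γ1]
  · rw [if_neg h, integral_coord2 h (fun t => t) (fun t => t), integral_id_γ1, mul_zero]

lemma norm_le_sum_abs (z : Fin d → ℝ) : ‖z‖ ≤ ∑ i, |z i| := by
  refine (pi_norm_le_iff_of_nonneg (by positivity)).mpr fun i => ?_
  rw [Real.norm_eq_abs]
  exact Finset.single_le_sum (fun j _ => abs_nonneg (z j)) (Finset.mem_univ i)

lemma integrable_norm_pi : Integrable (fun z : Fin d → ℝ => ‖z‖) (Measure.pi fun _ => γ1) := by
  refine Integrable.mono' (g := fun z => ∑ i, |z i|) ?_ ?_ ?_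
  · exact integrable_finset_sum _ fun i _ =>
      integrable_coord i (fun t => |t|) integrable_abs_γ1
  · exact (continuous_id.norm).aestronglyMeasurable
  · exact Filter.Eventually.of_forall fun z => by
      rw [Real.norm_eq_abs, abs_of_nonneg (norm_nonneg z)]
      exact norm_le_sum_abs z

lemma integrable_sq_norm_pi :
    Integrable (fun z : Fin d → ℝ => ‖z‖^2) (Measure.pi fun _ => γ1) := by
  refine Integrable.mono' (g := fun z => ∑ k, ∑ l, |z k| * |z l|) ?_ ?_ ?_
  · exact integrable_finset_sum _ fun k _ =>
      integrable_finset_sum _ fun l _ => integrable_abs_mul_coord k l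
  · exact ((continuous_id.norm).pow 2).aestronglyMeasurable
  · refine Filter.Eventually.of_forall fun z => ?_
    rw [Real.norm_eq_abs, abs_of_nonneg (by positivity)]
    calc ‖z‖^2 ≤ (∑ i, |z i|)^2 :=
          pow_le_pow_left₀ (norm_nonneg z) (norm_le_sum_abs z) 2
      _ = ∑ k, ∑ l, |z k| * |z l| := by rw [pow_two, Finset.sum_mul_sum]

lemma integrable_quad (A B : ℝ) :
    Integrable (fun z : Fin d → ℝ => (A * ‖z‖ + B)^2) (Measure.pi fun _ => γ1) := by
  have h := (((integrable_sq_norm_pi (d := d)).const_mul (A^2)).add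
    ((integrable_norm_pi (d := d)).const_mul (2*A*B))).add
    (integrable_const (μ := (Measure.pi fun _ : Fin d => γ1)) (B^2))
  refine h.congr (Filter.Eventually.of_forall fun z => ?_)
  show A ^ 2 * ‖z‖ ^ 2 + 2 * A * B * ‖z‖ + B ^ 2 = (A * ‖z‖ + B) ^ 2
  ring


lemma nnreal_sq (σ : ℝ) : (⟨σ^2, sq_nonneg σ⟩ : NNReal) * 1 = Real.toNNReal (σ^2) :=
  NNReal.coe_injective (by simp [Real.coe_toNNReal _ (sq_nonneg σ)]; rfl)

lemma map_affine (c : ℝ) (σ : ℝ) :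
    (gaussianReal 0 1).map (fun t => c + σ * t) = gaussianReal c (Real.toNNReal (σ^2)) := by
  have h1 : (gaussianReal 0 1).map (σ * ·) = gaussianReal 0 (Real.toNNReal (σ^2)) := by
    rw [gaussianReal_map_const_mul, mul_zero]
    congr 1
    apply NNReal.coe_injective
    simp [Real.coe_toNNReal _ (sq_nonneg σ)]
  rw [show (fun t : ℝ => c + σ * t) = ((c + ·) ∘ (σ * ·)) from rfl,
    ← Measure.map_map (measurable_const_add c) (measurable_const_mul σ), h1,
    gaussianReal_map_const_add, zero_add]

lemma measurable_T (x : Fin d → ℝ) (σ : ℝ) :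
    Measurable (fun z : Fin d → ℝ => fun i => x i + σ * z i) :=
  measurable_pi_lambda _ fun i => by fun_prop

lemma gaussianPi_eq_map (x : Fin d → ℝ) (σ : ℝ) :
    gaussianPi d x σ
      = Measure.map (fun z : Fin d → ℝ => fun i => x i + σ * z i)
          (Measure.pi fun _ => γ1) := by
  unfold gaussianPi
  refine Measure.pi_eq fun s hs => ?_
  rw [Measure.map_apply (measurable_T x σ) (MeasurableSet.univ_pi hs)]
  have hpre : (fun z : Fin d → ℝ => fun i => x i + σ * z i) ⁻¹' (Set.univ.pi s)
      = Set.univ.pi fun i => (fun t => x i + σ * t) ⁻¹' s i := by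
    ext z; simp [Set.mem_pi]
  rw [hpre, Measure.pi_pi]
  refine Finset.prod_congr rfl fun i _ => ?_
  rw [← map_affine (x i) σ,
    Measure.map_apply (show Measurable (fun t : ℝ => x i + σ * t) from
      ((measurable_id.const_mul σ)).const_add (x i)) (hs i)]
  rfl


variable {D : ℕ}

noncomputable def hfun (g : (Fin d → ℝ) → (Fin D → ℝ)) (x : Fin d → ℝ) (σ : ℝ)
    (z : Fin d → ℝ) : Fin D → ℝ := σ⁻¹ • (g (x + σ • z) - g x)

lemma hfun_bound {g : (Fin d → ℝ) → (Fin D → ℝ)} {K : ℝ}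
    (hlip : LipschitzWith K.toNNReal g) (hK : 0 ≤ K) (x : Fin d → ℝ) {σ : ℝ} (hσ : 0 < σ)
    (z : Fin d → ℝ) : ‖hfun g x σ z‖ ≤ K * ‖z‖ := by
  have h1 : ‖g (x + σ • z) - g x‖ ≤ K * (σ * ‖z‖) := by
    have := hlip.dist_le_mul (x + σ • z) x
    rw [dist_eq_norm, dist_eq_norm] at this
    simpa [norm_smul, abs_of_pos hσ, Real.coe_toNNReal _ hK, mul_assoc] using this
  rw [hfun, norm_smul, norm_inv, Real.norm_eq_abs, abs_of_pos hσ]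
  calc σ⁻¹ * ‖g (x + σ • z) - g x‖ ≤ σ⁻¹ * (K * (σ * ‖z‖)) := by
        exact mul_le_mul_of_nonneg_left h1 (by positivity)
    _ = K * ‖z‖ := by field_simp

lemma hfun_tendsto {g : (Fin d → ℝ) → (Fin D → ℝ)} (hgd : Differentiable ℝ g)
    (x z : Fin d → ℝ) :
    Tendsto (fun σ : ℝ => hfun g x σ z) (nhdsWithin 0 (Set.Ioi 0))
      (nhds (fderiv ℝ g x z)) := by
  have haff : HasDerivAt (fun σ : ℝ => x + σ • z) z 0 := by
    have := ((hasDerivAt_id (0:ℝ)).smul_const z).const_add x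
    simpa using this
  have hcomp : HasDerivAt (fun σ : ℝ => g (x + σ • z)) (fderiv ℝ g x z) 0 := by
    have := (hgd (x + (0:ℝ) • z)).hasFDerivAt.comp_hasDerivAt 0 haff
    simpa [Function.comp_def] using this
  have hslope := hasDerivAt_iff_tendsto_slope.mp hcomp
  have hsub : nhdsWithin (0:ℝ) (Set.Ioi 0) ≤ nhdsWithin (0:ℝ) {(0:ℝ)}ᶜ :=
    nhdsWithin_mono 0 (fun σ hσ => ne_of_gt hσ)
  refine (hslope.mono_left hsub).congr fun σ => ?_
  rw [slope_def_module]
  simp [hfun]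

lemma hfun_tendsto_apply {g : (Fin d → ℝ) → (Fin D → ℝ)} (hgd : Differentiable ℝ g)
    (x z : Fin d → ℝ) (a : Fin D) :
    Tendsto (fun σ : ℝ => hfun g x σ z a) (nhdsWithin 0 (Set.Ioi 0))
      (nhds (fderiv ℝ g x z a)) :=
  tendsto_pi_nhds.mp (hfun_tendsto hgd x z) a

lemma fderiv_apply_expand {g : (Fin d → ℝ) → (Fin D → ℝ)} (x z : Fin d → ℝ) (a : Fin D) :
    fderiv ℝ g x z a = ∑ k, z k * jacobianFn g x a k := by
  have hz : z = ∑ k, z k • (Pi.single k 1 : Fin d → ℝ) := by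
    funext j
    rw [Finset.sum_apply]
    simp [Pi.single_apply]
  conv_lhs => rw [hz]
  rw [map_sum]
  simp only [_root_.map_smul]
  rw [Finset.sum_apply]
  simp [jacobianFn]

lemma continuous_hfun {g : (Fin d → ℝ) → (Fin D → ℝ)} (hgc : Continuous g)
    (x : Fin d → ℝ) (σ : ℝ) : Continuous (hfun g x σ) := by
  unfold hfun
  exact ((hgc.comp (continuous_const.add ((continuous_const : Continuous fun _ : Fin d → ℝ => σ).smul continuous_id))).sub
    continuous_const).const_smul σ⁻¹


lemma integral_fderiv_apply_zero {g : (Fin d → ℝ) → (Fin D → ℝ)} (x : Fin d → ℝ) (a : Fin D) :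
    ∫ z : Fin d → ℝ, fderiv ℝ g x z a ∂(Measure.pi fun _ => γ1) = 0 := by
  simp_rw [fderiv_apply_expand x _ a]
  rw [integral_finset_sum _ (fun k _ =>
    (integrable_coord k (fun t => t) integrable_id_γ1).mul_const (jacobianFn g x a k))]
  refine Finset.sum_eq_zero fun k _ => ?_
  rw [integral_mul_const, integral_coord k (fun t => t), integral_id_γ1, zero_mul]

lemma integral_fderiv_mul {g : (Fin d → ℝ) → (Fin D → ℝ)} (x : Fin d → ℝ) (a b : Fin D) :
    ∫ z : Fin d → ℝ, (fderiv ℝ g x z a) * (fderiv ℝ g x z b) ∂(Measure.pi fun _ => γ1)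
      = ∑ k, jacobianFn g x a k * jacobianFn g x b k := by
  have hexp : ∀ z : Fin d → ℝ, (fderiv ℝ g x z a) * (fderiv ℝ g x z b)
      = ∑ k, ∑ l, (z k * z l) * (jacobianFn g x a k * jacobianFn g x b l) := by
    intro z
    rw [fderiv_apply_expand x z a, fderiv_apply_expand x z b, Finset.sum_mul_sum]
    refine Finset.sum_congr rfl fun k _ => Finset.sum_congr rfl fun l _ => by ring
  simp_rw [hexp]
  rw [integral_finset_sum _ (fun k _ => integrable_finset_sum _ (fun l _ =>
    (integrable_mul_coord k l).mul_const _))]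
  have : ∀ k : Fin d, ∫ z : Fin d → ℝ,
        (∑ l, (z k * z l) * (jacobianFn g x a k * jacobianFn g x b l))
        ∂(Measure.pi fun _ => γ1)
      = jacobianFn g x a k * jacobianFn g x b k := by
    intro k
    rw [integral_finset_sum _ (fun l _ => (integrable_mul_coord k l).mul_const _)]
    have h2 : ∀ l : Fin d, ∫ z : Fin d → ℝ,
          (z k * z l) * (jacobianFn g x a k * jacobianFn g x b l)
          ∂(Measure.pi fun _ => γ1)
        = (if k = l then 1 else 0) * (jacobianFn g x a k * jacobianFn g x b l) := by
      intro l
      rw [integral_mul_const, integral_mul_coord k l]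
    simp_rw [h2, ite_mul, one_mul, zero_mul]
    rw [Finset.sum_ite_eq Finset.univ k
      (fun l => jacobianFn g x a k * jacobianFn g x b l)]
    simp
  simp_rw [this]


lemma Tz_eq (x : Fin d → ℝ) (σ : ℝ) (z : Fin d → ℝ) :
    (fun i => x i + σ * z i) = x + σ • z := rfl

lemma g_decomp {g : (Fin d → ℝ) → (Fin D → ℝ)} (x : Fin d → ℝ) {σ : ℝ} (hσ : σ ≠ 0)
    (z : Fin d → ℝ) (a : Fin D) :
    g (x + σ • z) a = g x a + σ * hfun g x σ z a := by
  unfold hfun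
  simp only [Pi.smul_apply, Pi.sub_apply, smul_eq_mul]
  field_simp
  ring

lemma integrable_hfun_apply {g : (Fin d → ℝ) → (Fin D → ℝ)} {K : ℝ}
    (hgc : Continuous g) (hlip : LipschitzWith K.toNNReal g) (hK : 0 ≤ K)
    (x : Fin d → ℝ) {σ : ℝ} (hσ : 0 < σ) (a : Fin D) :
    Integrable (fun z : Fin d → ℝ => hfun g x σ z a) (Measure.pi fun _ => γ1) := by
  refine Integrable.mono' ((integrable_norm_pi (d := d)).const_mul K)
    (((continuous_apply a).comp (continuous_hfun hgc x σ)).aestronglyMeasurable)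
    (Filter.Eventually.of_forall fun z => ?_)
  calc ‖hfun g x σ z a‖ ≤ ‖hfun g x σ z‖ := norm_le_pi_norm _ a
    _ ≤ K * ‖z‖ := hfun_bound hlip hK x hσ z

lemma mean_eq {g : (Fin d → ℝ) → (Fin D → ℝ)} {K : ℝ}
    (hgc : Continuous g) (hlip : LipschitzWith K.toNNReal g) (hK : 0 ≤ K)
    (x : Fin d → ℝ) {σ : ℝ} (hσ : 0 < σ) (a : Fin D) :
    ∫ y, g y a ∂(gaussianPi d x σ)
      = g x a + σ * ∫ z : Fin d → ℝ, hfun g x σ z a ∂(Measure.pi fun _ => γ1) := by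
  rw [gaussianPi_eq_map x σ,
    integral_map (measurable_T x σ).aemeasurable
      (Continuous.aestronglyMeasurable
        (show Continuous (fun y : Fin d → ℝ => g y a) from (continuous_apply a).comp hgc))]
  have : ∀ z : Fin d → ℝ, g (fun i => x i + σ * z i) a = g x a + σ * hfun g x σ z a := by
    intro z
    rw [Tz_eq x σ z]
    exact g_decomp x hσ.ne' z a
  simp_rw [this]
  rw [integral_add (integrable_const _)
    ((integrable_hfun_apply hgc hlip hK x hσ a).const_mul σ), integral_const,
    MeasureTheory.integral_const_mul]
  simp

lemma cov_reduction {g : (Fin d → ℝ) → (Fin D → ℝ)} {K : ℝ}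
    (hgc : Continuous g) (hlip : LipschitzWith K.toNNReal g) (hK : 0 ≤ K)
    (x : Fin d → ℝ) {σ : ℝ} (hσ : 0 < σ) (a b : Fin D) :
    ((σ^2)⁻¹ • covFn (gaussianPi d x σ) g) a b
      = ∫ z : Fin d → ℝ,
          (hfun g x σ z a - ∫ w : Fin d → ℝ, hfun g x σ w a ∂(Measure.pi fun _ => γ1))
          * (hfun g x σ z b - ∫ w : Fin d → ℝ, hfun g x σ w b ∂(Measure.pi fun _ => γ1))
          ∂(Measure.pi fun _ => γ1) := by
  have hσ2 : (σ:ℝ)^2 ≠ 0 := pow_ne_zero 2 hσ.ne'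
  set Ma := ∫ w : Fin d → ℝ, hfun g x σ w a ∂(Measure.pi fun _ => γ1) with hMa
  set Mb := ∫ w : Fin d → ℝ, hfun g x σ w b ∂(Measure.pi fun _ => γ1) with hMb
  have hcov : covFn (gaussianPi d x σ) g a b
      = ∫ z : Fin d → ℝ, σ^2 * ((hfun g x σ z a - Ma) * (hfun g x σ z b - Mb))
          ∂(Measure.pi fun _ => γ1) := by
    show (∫ y, (g y a - ∫ w, g w a ∂(gaussianPi d x σ))
        * (g y b - ∫ w, g w b ∂(gaussianPi d x σ)) ∂(gaussianPi d x σ)) = _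
    rw [mean_eq hgc hlip hK x hσ a, mean_eq hgc hlip hK x hσ b, ← hMa, ← hMb]
    rw [gaussianPi_eq_map x σ,
      integral_map (measurable_T x σ).aemeasurable
        (Continuous.aestronglyMeasurable
          (show Continuous (fun y : Fin d → ℝ => (g y a - (g x a + σ * Ma))
              * (g y b - (g x b + σ * Mb))) from
            (((continuous_apply a).comp hgc).sub continuous_const).mul
              (((continuous_apply b).comp hgc).sub continuous_const)))]
    refine integral_congr_ae (Filter.Eventually.of_forall fun z => ?_)
    have ha' := g_decomp (g := g) x hσ.ne' z a
    have hb' := g_decomp (g := g) x hσ.ne' z b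
    dsimp only
    rw [Tz_eq x σ z, ha', hb']
    ring
  rw [Pi.smul_apply, Pi.smul_apply, smul_eq_mul, hcov, MeasureTheory.integral_const_mul,
    inv_mul_cancel_left₀ hσ2]


lemma mean_tendsto {g : (Fin d → ℝ) → (Fin D → ℝ)} {K : ℝ}
    (hgc : Continuous g) (hlip : LipschitzWith K.toNNReal g) (hK : 0 ≤ K)
    (hgd : Differentiable ℝ g) (x : Fin d → ℝ) (a : Fin D) :
    Tendsto (fun σ : ℝ => ∫ z : Fin d → ℝ, hfun g x σ z a ∂(Measure.pi fun _ => γ1))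
      (nhdsWithin 0 (Set.Ioi 0)) (nhds 0) := by
  have h : Tendsto (fun σ : ℝ => ∫ z : Fin d → ℝ, hfun g x σ z a ∂(Measure.pi fun _ => γ1))
      (nhdsWithin 0 (Set.Ioi 0))
      (nhds (∫ z : Fin d → ℝ, fderiv ℝ g x z a ∂(Measure.pi fun _ => γ1))) := by
    refine tendsto_integral_filter_of_dominated_convergence (fun z => K * ‖z‖) ?_ ?_ ?_ ?_
    · exact Filter.Eventually.of_forall fun σ =>
        (((continuous_apply a).comp (continuous_hfun hgc x σ)).aestronglyMeasurable)
    · filter_upwards [self_mem_nhdsWithin] with σ hσ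
      refine Filter.Eventually.of_forall fun z => ?_
      calc ‖hfun g x σ z a‖ ≤ ‖hfun g x σ z‖ := norm_le_pi_norm _ a
        _ ≤ K * ‖z‖ := hfun_bound hlip hK x hσ z
    · exact (integrable_norm_pi (d := d)).const_mul K
    · exact Filter.Eventually.of_forall fun z => hfun_tendsto_apply hgd x z a
  rw [integral_fderiv_apply_zero (g := g) x a] at h
  exact h

lemma main_tendsto {g : (Fin d → ℝ) → (Fin D → ℝ)} {K : ℝ}
    (hgc : Continuous g) (hlip : LipschitzWith K.toNNReal g) (hK : 0 ≤ K)
    (hgd : Differentiable ℝ g) (x : Fin d → ℝ) (a b : Fin D) :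
    Tendsto (fun σ : ℝ => ∫ z : Fin d → ℝ,
        (hfun g x σ z a - ∫ w : Fin d → ℝ, hfun g x σ w a ∂(Measure.pi fun _ => γ1))
        * (hfun g x σ z b - ∫ w : Fin d → ℝ, hfun g x σ w b ∂(Measure.pi fun _ => γ1))
        ∂(Measure.pi fun _ => γ1))
      (nhdsWithin 0 (Set.Ioi 0))
      (nhds (∫ z : Fin d → ℝ, (fderiv ℝ g x z a) * (fderiv ℝ g x z b)
        ∂(Measure.pi fun _ => γ1))) := by
  set c := ∫ z : Fin d → ℝ, ‖z‖ ∂(Measure.pi fun _ => γ1) with hc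
  have hc0 : 0 ≤ c := integral_nonneg fun z => norm_nonneg z
  have habs : ∀ (σ : ℝ), 0 < σ → ∀ z : Fin d → ℝ, ∀ e : Fin D,
      |hfun g x σ z e| ≤ K * ‖z‖ := by
    intro σ hσ z e
    calc |hfun g x σ z e| = ‖hfun g x σ z e‖ := (Real.norm_eq_abs _).symm
      _ ≤ ‖hfun g x σ z‖ := norm_le_pi_norm _ e
      _ ≤ K * ‖z‖ := hfun_bound hlip hK x hσ z
  have hmean_bound : ∀ (σ : ℝ), 0 < σ → ∀ e : Fin D,
      |∫ w : Fin d → ℝ, hfun g x σ w e ∂(Measure.pi fun _ => γ1)| ≤ K * c := by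
    intro σ hσ e
    calc |∫ w : Fin d → ℝ, hfun g x σ w e ∂(Measure.pi fun _ => γ1)|
        = ‖∫ w : Fin d → ℝ, hfun g x σ w e ∂(Measure.pi fun _ => γ1)‖ :=
          (Real.norm_eq_abs _).symm
      _ ≤ ∫ w : Fin d → ℝ, ‖hfun g x σ w e‖ ∂(Measure.pi fun _ => γ1) :=
          norm_integral_le_integral_norm _
      _ = ∫ w : Fin d → ℝ, |hfun g x σ w e| ∂(Measure.pi fun _ => γ1) := by
          simp [Real.norm_eq_abs]
      _ ≤ ∫ w : Fin d → ℝ, K * ‖w‖ ∂(Measure.pi fun _ => γ1) := by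
          refine integral_mono ((integrable_hfun_apply hgc hlip hK x hσ e).abs)
            ((integrable_norm_pi (d := d)).const_mul K) (fun w => habs σ hσ w e)
      _ = K * c := by rw [MeasureTheory.integral_const_mul]
  have htri : ∀ (u m : ℝ), |u - m| ≤ |u| + |m| := fun u m => by
    rw [sub_eq_add_neg]
    exact (abs_add_le _ _).trans (by rw [abs_neg])
  refine tendsto_integral_filter_of_dominated_convergence
    (fun z => (K * ‖z‖ + K * c)^2) ?_ ?_ ?_ ?_
  · refine Filter.Eventually.of_forall fun σ => Continuous.aestronglyMeasurable ?_
    exact (((continuous_apply a).comp (continuous_hfun hgc x σ)).sub continuous_const).mul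
      (((continuous_apply b).comp (continuous_hfun hgc x σ)).sub continuous_const)
  · filter_upwards [self_mem_nhdsWithin] with σ hσ
    refine Filter.Eventually.of_forall fun z => ?_
    rw [Real.norm_eq_abs, abs_mul]
    have h1 : |hfun g x σ z a - ∫ w : Fin d → ℝ, hfun g x σ w a ∂(Measure.pi fun _ => γ1)|
        ≤ K * ‖z‖ + K * c :=
      (htri _ _).trans (add_le_add (habs σ hσ z a) (hmean_bound σ hσ a))
    have h2 : |hfun g x σ z b - ∫ w : Fin d → ℝ, hfun g x σ w b ∂(Measure.pi fun _ => γ1)|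
        ≤ K * ‖z‖ + K * c :=
      (htri _ _).trans (add_le_add (habs σ hσ z b) (hmean_bound σ hσ b))
    calc |hfun g x σ z a - _| * |hfun g x σ z b - _|
        ≤ (K * ‖z‖ + K * c) * (K * ‖z‖ + K * c) :=
          mul_le_mul h1 h2 (abs_nonneg _) (by positivity)
      _ = (K * ‖z‖ + K * c)^2 := (pow_two _).symm
  · exact integrable_quad K (K * c)
  · refine Filter.Eventually.of_forall fun z => ?_
    have ha := (hfun_tendsto_apply hgd x z a).sub (mean_tendsto hgc hlip hK hgd x a)
    have hb := (hfun_tendsto_apply hgd x z b).sub (mean_tendsto hgc hlip hK hgd x b)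
    simpa using ha.mul hb


lemma lipschitz_of_bound {g : (Fin d → ℝ) → (Fin D → ℝ)} {K : ℝ}
    (hgd : Differentiable ℝ g) (hK : 0 ≤ K)
    (hfd : ∀ y, ‖fderiv ℝ g y‖ ≤ K) : LipschitzWith K.toNNReal g := by
  refine lipschitzWith_of_nnnorm_fderiv_le hgd fun y => ?_
  rw [← NNReal.coe_le_coe, coe_nnnorm, Real.coe_toNNReal _ hK]
  exact hfd y

end CovAux

/-- `(1/σ²) Cov(g(X_σ)) → J_g(x) J_g(x)ᵀ` as `σ → 0⁺`. -/
theorem cov_pushforward_gaussian_tendsto (d D : ℕ)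
    (g : (Fin d → ℝ) → (Fin D → ℝ)) (hg : ContDiff ℝ 3 g)
    (hbd : ∀ n : ℕ, n ≤ 3 → ∃ M : ℝ, ∀ y, ‖iteratedFDeriv ℝ n g y‖ ≤ M)
    (x : Fin d → ℝ) :
    Filter.Tendsto (fun σ : ℝ => (σ ^ 2)⁻¹ • covFn (gaussianPi d x σ) g)
      (nhdsWithin 0 (Set.Ioi 0))
      (nhds (fun a b => ∑ k, jacobianFn g x a k * jacobianFn g x b k)) := by
  obtain ⟨M, hM⟩ := hbd 1 (by norm_num)
  set K : ℝ := max M 0 with hKdef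
  have hK0 : 0 ≤ K := le_max_right M 0
  have hgd : Differentiable ℝ g := hg.differentiable (by norm_num)
  have hgc : Continuous g := hgd.continuous
  have hfd : ∀ y, ‖fderiv ℝ g y‖ ≤ K := by
    intro y
    refine ContinuousLinearMap.opNorm_le_bound _ hK0 fun u => ?_
    have h1 : fderiv ℝ g y u = iteratedFDeriv ℝ 1 g y (fun _ => u) := by
      rw [iteratedFDeriv_one_apply]
    rw [h1]
    calc ‖iteratedFDeriv ℝ 1 g y (fun _ => u)‖
        ≤ ‖iteratedFDeriv ℝ 1 g y‖ * ∏ _i : Fin 1, ‖u‖ :=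
          (iteratedFDeriv ℝ 1 g y).le_opNorm _
      _ = ‖iteratedFDeriv ℝ 1 g y‖ * ‖u‖ := by simp
      _ ≤ K * ‖u‖ := by
          exact mul_le_mul_of_nonneg_right ((hM y).trans (le_max_left M 0)) (norm_nonneg u)
  have hlip : LipschitzWith K.toNNReal g := CovAux.lipschitz_of_bound hgd hK0 hfd
  rw [tendsto_pi_nhds]
  intro a
  rw [tendsto_pi_nhds]
  intro b
  have hmain := CovAux.main_tendsto hgc hlip hK0 hgd x a b
  have heq : (fun σ : ℝ => ∫ z : Fin d → ℝ,
        (CovAux.hfun g x σ z a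
          - ∫ w : Fin d → ℝ, CovAux.hfun g x σ w a ∂(Measure.pi fun _ => CovAux.γ1))
        * (CovAux.hfun g x σ z b
          - ∫ w : Fin d → ℝ, CovAux.hfun g x σ w b ∂(Measure.pi fun _ => CovAux.γ1))
        ∂(Measure.pi fun _ => CovAux.γ1))
      =ᶠ[nhdsWithin 0 (Set.Ioi 0)]
      (fun σ : ℝ => ((σ ^ 2)⁻¹ • covFn (gaussianPi d x σ) g) a b) := by
    filter_upwards [self_mem_nhdsWithin] with σ hσ
    exact (CovAux.cov_reduction hgc hlip hK0 x hσ a b).symm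
  have := hmain.congr' heq
  rw [CovAux.integral_fderiv_mul x a b] at this
  exact this
end

section
/- Let h : U → ℝ^d be a C¹ map on a connected open set U ⊆ ℝ^d whose Jacobian satisfies J_h(x)^T J_h(x) = I_d for all x ∈ U. Then h is a rigid motion restricted to U: there exist an orthogonal matrix Q ∈ O(d) and a vector c ∈ ℝ^d such that h(x) = Qx + c for all x ∈ U. -/
open RealInnerProductSpace

open Metric Filter Topology in
private lemma rigidity_inner_four {F : Type*} [NormedAddCommGroup F] [InnerProductSpace ℝ F]
    (a b c e : F) :
    ⟪a - b, c - e⟫ = (‖a - e‖^2 + ‖b - c‖^2 - ‖a - c‖^2 - ‖b - e‖^2)/2 := by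
  simp only [norm_sub_sq_real, inner_sub_left, inner_sub_right]
  ring

open Metric Filter Topology in
private lemma rigidity_eq_of_locally_const {X α : Type*} [TopologicalSpace X] {U : Set X}
    (hconn : IsPreconnected U) {f : X → α}
    (hl : ∀ x ∈ U, ∀ᶠ z in 𝓝 x, f z = f x) {x y : X} (hx : x ∈ U) (hy : y ∈ U) :
    f y = f x := by
  set V : Set X := {z | ∀ᶠ w in 𝓝 z, f w = f x} with hV
  set W : Set X := {z | ∀ᶠ w in 𝓝 z, f w ≠ f x} with hW
  have hVo : IsOpen V := isOpen_setOf_eventually_nhds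
  have hWo : IsOpen W := isOpen_setOf_eventually_nhds
  have hdisj : Disjoint V W := by
    rw [Set.disjoint_left]
    intro z hz1 hz2
    have := (hz1.and hz2).self_of_nhds
    exact this.2 this.1
  have hsub : U ⊆ V ∪ W := by
    intro z hz
    rcases eq_or_ne (f z) (f x) with hfz | hfz
    · exact Or.inl ((hl z hz).mono fun w hw => hw.trans hfz)
    · exact Or.inr ((hl z hz).mono fun w hw => hw ▸ hfz)
  have hne : (U ∩ V).Nonempty := ⟨x, hx, hl x hx⟩
  exact ((hconn.subset_left_of_subset_union hVo hWo hdisj hsub hne) hy).self_of_nhds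

/-- Liouville-type rigidity: a C¹ map on a connected open set
`U ⊆ ℝ^d` whose Jacobian satisfies `J_h(x)ᵀ J_h(x) = I_d` everywhere on `U`
(i.e. its differential preserves inner products) is the restriction of a rigid
motion: `h(x) = Qx + c` with `Q` orthogonal. -/
theorem rigidity_of_jacobian_orthogonal (d : ℕ)
    (U : Set (EuclideanSpace ℝ (Fin d))) (hUopen : IsOpen U) (hUconn : IsConnected U)
    (h : EuclideanSpace ℝ (Fin d) → EuclideanSpace ℝ (Fin d))
    (hC1 : ContDiffOn ℝ 1 h U)
    (hiso : ∀ x ∈ U, ∀ v w : EuclideanSpace ℝ (Fin d),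
      ⟪fderiv ℝ h x v, fderiv ℝ h x w⟫ = ⟪v, w⟫) :
    ∃ (Q : EuclideanSpace ℝ (Fin d) ≃ₗᵢ[ℝ] EuclideanSpace ℝ (Fin d))
      (c : EuclideanSpace ℝ (Fin d)), ∀ x ∈ U, h x = Q x + c := by
  open Metric Filter Topology in
  have hnorm : ∀ x ∈ U, ∀ v, ‖fderiv ℝ h x v‖ = ‖v‖ := by
    intro x hx v
    have h1 := hiso x hx v v
    rw [real_inner_self_eq_norm_sq, real_inner_self_eq_norm_sq] at h1
    nlinarith [norm_nonneg (fderiv ℝ h x v), norm_nonneg v]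
  have hdiff : ∀ x ∈ U, DifferentiableAt ℝ h x := fun x hx =>
    (hC1.contDiffAt (hUopen.mem_nhds hx)).differentiableAt one_ne_zero
  have hopnorm : ∀ x ∈ U, ‖fderiv ℝ h x‖ ≤ 1 := fun x hx =>
    ContinuousLinearMap.opNorm_le_bound _ zero_le_one fun v => by
      rw [hnorm x hx v, one_mul]
  -- Step 1: local distance preservation
  have key : ∀ x₀ ∈ U, ∃ ε > 0, Metric.ball x₀ ε ⊆ U ∧
      ∀ a ∈ Metric.ball x₀ ε, ∀ b ∈ Metric.ball x₀ ε, ‖h a - h b‖ = ‖a - b‖ := by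
    intro x₀ hx₀
    have hCx : ContDiffAt ℝ 1 h x₀ := hC1.contDiffAt (hUopen.mem_nhds hx₀)
    set A := fderiv ℝ h x₀ with hA
    set e : EuclideanSpace ℝ (Fin d) ≃ₗᵢ[ℝ] EuclideanSpace ℝ (Fin d) :=
      (A.toLinearMap.isometryOfInner (hiso x₀ hx₀)).toLinearIsometryEquiv rfl with he
    set e' : EuclideanSpace ℝ (Fin d) ≃L[ℝ] EuclideanSpace ℝ (Fin d) :=
      e.toContinuousLinearEquiv with he'
    have hcoe : (e' : EuclideanSpace ℝ (Fin d) →L[ℝ] EuclideanSpace ℝ (Fin d)) = A := by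
      ext v
      rfl
    have hf' : HasFDerivAt h
        (e' : EuclideanSpace ℝ (Fin d) →L[ℝ] EuclideanSpace ℝ (Fin d)) x₀ := by
      rw [hcoe]
      exact (hdiff x₀ hx₀).hasFDerivAt
    have S : HasStrictFDerivAt h
        (e' : EuclideanSpace ℝ (Fin d) →L[ℝ] EuclideanSpace ℝ (Fin d)) x₀ :=
      hCx.hasStrictFDerivAt' hf' one_ne_zero
    set g := S.localInverse h e' x₀ with hg
    have E1 : ∀ᶠ y in nhds (h x₀), h (g y) = y := S.eventually_right_inverse
    have E2 : ∀ᶠ y in nhds (h x₀), g y ∈ U := by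
      have hc : ContinuousAt g (h x₀) := S.localInverse_continuousAt
      have hm : U ∈ nhds (g (h x₀)) := by
        rw [hg, S.localInverse_apply_image]; exact hUopen.mem_nhds hx₀
      exact hc.eventually_mem hm
    have hg1 : ContDiffAt ℝ 1 g (h x₀) := hCx.to_localInverse hf' one_ne_zero
    obtain ⟨t, ht, hgt⟩ := hg1.contDiffOn le_rfl (by simp)
    have E4 : ∀ᶠ y in nhds (h x₀), DifferentiableAt ℝ g y := by
      filter_upwards [interior_mem_nhds.mpr ht] with y hy
      exact ((hgt.mono interior_subset).differentiableOn one_ne_zero).differentiableAt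
        (isOpen_interior.mem_nhds hy)
    obtain ⟨δ, hδ, hball⟩ := Metric.eventually_nhds_iff_ball.mp ((E1.and E2).and E4)
    have hgnorm : ∀ y ∈ Metric.ball (h x₀) δ, ‖fderiv ℝ g y‖ ≤ 1 := by
      intro y hy
      obtain ⟨⟨hy1, hy2⟩, hy3⟩ := hball y hy
      have hev : (fun z => h (g z)) =ᶠ[nhds y] id := by
        filter_upwards [Metric.isOpen_ball.mem_nhds hy] with z hz using (hball z hz).1.1
      have hcomp : HasFDerivAt (fun z => h (g z))
          ((fderiv ℝ h (g y)).comp (fderiv ℝ g y)) y :=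
        ((hdiff (g y) hy2).hasFDerivAt).comp y hy3.hasFDerivAt
      have hid : HasFDerivAt (fun z => h (g z))
          (ContinuousLinearMap.id ℝ (EuclideanSpace ℝ (Fin d))) y :=
        (hasFDerivAt_id y).congr_of_eventuallyEq hev
      have huniq : (fderiv ℝ h (g y)).comp (fderiv ℝ g y)
          = ContinuousLinearMap.id ℝ (EuclideanSpace ℝ (Fin d)) := hcomp.unique hid
      refine ContinuousLinearMap.opNorm_le_bound _ zero_le_one fun v => ?_
      have h2 : fderiv ℝ h (g y) (fderiv ℝ g y v) = v := by
        have := congrArg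
          (fun T : EuclideanSpace ℝ (Fin d) →L[ℝ] EuclideanSpace ℝ (Fin d) => T v) huniq
        simpa using this
      calc ‖fderiv ℝ g y v‖ = ‖fderiv ℝ h (g y) (fderiv ℝ g y v)‖ := (hnorm (g y) hy2 _).symm
        _ = ‖v‖ := by rw [h2]
        _ ≤ 1 * ‖v‖ := by rw [one_mul]
    have E5 : ∀ᶠ x in nhds x₀, g (h x) = x ∧ x ∈ U :=
      S.eventually_left_inverse.and (hUopen.eventually_mem hx₀)
    obtain ⟨ε₀, hε₀, hball2⟩ := Metric.eventually_nhds_iff_ball.mp E5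
    refine ⟨min ε₀ δ, lt_min hε₀ hδ, ?_, ?_⟩
    · intro z hz
      exact (hball2 z (Metric.ball_subset_ball (min_le_left _ _) hz)).2
    · have hballU : Metric.ball x₀ (min ε₀ δ) ⊆ U := fun z hz =>
        (hball2 z (Metric.ball_subset_ball (min_le_left _ _) hz)).2
      have lip : ∀ a ∈ Metric.ball x₀ (min ε₀ δ), ∀ b ∈ Metric.ball x₀ (min ε₀ δ),
          ‖h a - h b‖ ≤ ‖a - b‖ := by
        intro a ha b hb
        have := (convex_ball x₀ (min ε₀ δ)).norm_image_sub_le_of_norm_fderiv_le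
          (fun z hz => hdiff z (hballU hz)) (fun z hz => hopnorm z (hballU hz)) hb ha
        simpa using this
      intro a ha b hb
      have himg : ∀ c ∈ Metric.ball x₀ (min ε₀ δ), h c ∈ Metric.ball (h x₀) δ := by
        intro c hc
        have h1 := lip c hc x₀ (Metric.mem_ball_self (lt_min hε₀ hδ))
        have h2 : ‖c - x₀‖ < min ε₀ δ := mem_ball_iff_norm.mp hc
        rw [mem_ball_iff_norm]
        exact lt_of_le_of_lt h1 (lt_of_lt_of_le h2 (min_le_right _ _))
      have glip : ‖g (h a) - g (h b)‖ ≤ ‖h a - h b‖ := by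
        have := (convex_ball (h x₀) δ).norm_image_sub_le_of_norm_fderiv_le
          (fun z hz => (hball z hz).2) (fun z hz => hgnorm z hz) (himg b hb) (himg a ha)
        simpa using this
      rw [(hball2 a (Metric.ball_subset_ball (min_le_left _ _) ha)).1,
          (hball2 b (Metric.ball_subset_ball (min_le_left _ _) hb)).1] at glip
      exact le_antisymm (lip a ha b hb) glip
  -- Step 2: the derivative is locally constant
  have hlocconst : ∀ x₀ ∈ U, ∀ᶠ z in nhds x₀, fderiv ℝ h z = fderiv ℝ h x₀ := by
    intro x₀ hx₀
    obtain ⟨ε, hε, hballU, hpres⟩ := key x₀ hx₀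
    have hinner4 : ∀ a ∈ Metric.ball x₀ ε, ∀ b ∈ Metric.ball x₀ ε, ∀ c ∈ Metric.ball x₀ ε,
        ∀ e ∈ Metric.ball x₀ ε, ⟪h a - h b, h c - h e⟫ = ⟪a - b, c - e⟫ := by
      intro a ha b hb c hc e he
      rw [rigidity_inner_four, rigidity_inner_four, hpres a ha e he, hpres b hb c hc,
        hpres a ha c hc, hpres b hb e he]
    have hDD : ∀ x ∈ Metric.ball x₀ ε, ∀ y ∈ Metric.ball x₀ ε,
        ∀ v w : EuclideanSpace ℝ (Fin d),
        ⟪fderiv ℝ h x v, fderiv ℝ h y w⟫ = ⟪v, w⟫ := by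
      intro x hx y hy v w
      have line : ∀ (z u : EuclideanSpace ℝ (Fin d)), z ∈ Metric.ball x₀ ε →
          HasDerivAt (fun t : ℝ => h (z + t • u)) (fderiv ℝ h z u) 0 := by
        intro z u hz
        have hline : HasDerivAt (fun t : ℝ => z + t • u) u 0 := by
          simpa using ((hasDerivAt_id (0:ℝ)).smul_const u).const_add z
        have hz' : HasFDerivAt h (fderiv ℝ h z) ((fun t : ℝ => z + t • u) 0) := by
          simpa using (hdiff z (hballU hz)).hasFDerivAt
        exact hz'.comp_hasDerivAt 0 hline
      have t1 := hasDerivAt_iff_tendsto_slope.mp (line x v hx)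
      have t2 := hasDerivAt_iff_tendsto_slope.mp (line y w hy)
      have t3 : Filter.Tendsto (fun t : ℝ =>
          ⟪slope (fun t : ℝ => h (x + t • v)) 0 t, slope (fun t : ℝ => h (y + t • w)) 0 t⟫)
          (nhdsWithin 0 {(0:ℝ)}ᶜ) (nhds ⟪fderiv ℝ h x v, fderiv ℝ h y w⟫) := t1.inner t2
      have hmem1 : ∀ᶠ t : ℝ in nhds 0, x + t • v ∈ Metric.ball x₀ ε := by
        have hc : ContinuousAt (fun t : ℝ => x + t • v) 0 :=
          (continuous_const.add (continuous_id.smul continuous_const)).continuousAt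
        exact hc.eventually_mem (by simpa using Metric.isOpen_ball.mem_nhds hx)
      have hmem2 : ∀ᶠ t : ℝ in nhds 0, y + t • w ∈ Metric.ball x₀ ε := by
        have hc : ContinuousAt (fun t : ℝ => y + t • w) 0 :=
          (continuous_const.add (continuous_id.smul continuous_const)).continuousAt
        exact hc.eventually_mem (by simpa using Metric.isOpen_ball.mem_nhds hy)
      have heq : ∀ᶠ t : ℝ in nhdsWithin 0 {(0:ℝ)}ᶜ,
          ⟪slope (fun t : ℝ => h (x + t • v)) 0 t, slope (fun t : ℝ => h (y + t • w)) 0 t⟫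
            = ⟪v, w⟫ := by
        filter_upwards [hmem1.filter_mono nhdsWithin_le_nhds,
          hmem2.filter_mono nhdsWithin_le_nhds, self_mem_nhdsWithin] with t h1 h2 ht
        have ht0 : (t : ℝ) ≠ 0 := ht
        have hx0 : x + (0:ℝ) • v = x := by simp
        have hy0 : y + (0:ℝ) • w = y := by simp
        rw [slope_def_module, slope_def_module, sub_zero, hx0, hy0,
          real_inner_smul_left, real_inner_smul_right,
          hinner4 _ h1 _ hx _ h2 _ hy]
        have hxv : (x + t • v - x : EuclideanSpace ℝ (Fin d)) = t • v := by abel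
        rw [hxv]
        have hyw : (y + t • w - y : EuclideanSpace ℝ (Fin d)) = t • w := by abel
        rw [hyw, real_inner_smul_left, real_inner_smul_right]
        field_simp
      exact tendsto_nhds_unique ((Filter.tendsto_congr' heq).mp t3) tendsto_const_nhds
    refine Metric.eventually_nhds_iff_ball.mpr ⟨ε, hε, fun x hx => ?_⟩
    have hx₀b : x₀ ∈ Metric.ball x₀ ε := Metric.mem_ball_self hε
    refine ContinuousLinearMap.ext fun v => ?_
    have e1 := hDD x hx x hx v v
    have e2 := hDD x hx x₀ hx₀b v v
    have e3 := hDD x₀ hx₀b x₀ hx₀b v v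
    have e2' : ⟪fderiv ℝ h x₀ v, fderiv ℝ h x v⟫ = ⟪v, v⟫ := by
      rw [real_inner_comm]; exact e2
    have hsq : ‖fderiv ℝ h x v - fderiv ℝ h x₀ v‖^2 = 0 := by
      rw [← real_inner_self_eq_norm_sq, inner_sub_left, inner_sub_right, inner_sub_right,
        e1, e2, e2', e3]
      ring
    have hz : fderiv ℝ h x v - fderiv ℝ h x₀ v = 0 := by
      rw [← norm_eq_zero]
      exact pow_eq_zero_iff (two_ne_zero) |>.mp hsq
    exact sub_eq_zero.mp hz
  -- Step 3: the derivative is constant on U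
  obtain ⟨x₀, hx₀⟩ := hUconn.nonempty
  have hDconst : ∀ x ∈ U, fderiv ℝ h x = fderiv ℝ h x₀ := fun x hx =>
    rigidity_eq_of_locally_const hUconn.isPreconnected hlocconst hx₀ hx
  set A := fderiv ℝ h x₀ with hA
  -- Step 4: h - A is locally constant, hence constant on U
  have hfun : ∀ x ∈ U, ∀ᶠ z in nhds x, h z - A z = h x - A x := by
    intro x hx
    obtain ⟨ε, hε, hballU⟩ := Metric.isOpen_iff.mp hUopen x hx
    refine Metric.eventually_nhds_iff_ball.mpr ⟨ε, hε, fun z hz => ?_⟩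
    have hb : ‖(h z - A z) - (h x - A x)‖ ≤ 0 * ‖z - x‖ := by
      have := (convex_ball x ε).norm_image_sub_le_of_norm_fderiv_le
        (f := fun w => h w - A w) (C := 0)
        (fun w hw => (hdiff w (hballU hw)).sub A.differentiableAt)
        (fun w hw => by
          rw [fderiv_fun_sub (hdiff w (hballU hw)) A.differentiableAt, A.fderiv,
            hDconst w (hballU hw), sub_self, norm_zero])
        (Metric.mem_ball_self hε) hz
      simpa using this
    rw [zero_mul] at hb
    exact sub_eq_zero.mp (norm_le_zero_iff.mp hb)
  have hc : ∀ x ∈ U, h x - A x = h x₀ - A x₀ := fun x hx =>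
    rigidity_eq_of_locally_const hUconn.isPreconnected hfun hx₀ hx
  refine ⟨(A.toLinearMap.isometryOfInner (hiso x₀ hx₀)).toLinearIsometryEquiv rfl,
    h x₀ - A x₀, fun x hx => ?_⟩
  have hQ : ((A.toLinearMap.isometryOfInner (hiso x₀ hx₀)).toLinearIsometryEquiv rfl) x
      = A x := rfl
  rw [hQ]
  have := hc x hx
  have h3 := eq_add_of_sub_eq this
  rw [h3, add_comm]
end
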